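/- Let k, m be positive integers with k + 1 ≤ m. Let a ∈ ℂ^m and let b : {1,…,m}^k → ℂ be alternating, i.e., b(J∘σ) = sgn(σ)·b(J) for every tuple J ∈ {1,…,m}^k and every permutation σ of {1,…,k}. For each strictly increasing tuple I = (i_1 < ⋯ < i_{k+1}) of indices in {1,…,m}, define Λ(a,b)_I = Σ_{t=1}^{k+1} (−1)^{t+1} a_{i_t} b(I_{−t}), where I_{−t} denotes I with its t-th entry removed. Then Σ_{I strictly increasing (k+1)-tuples} |Λ(a,b)_I| ≤ (Σ_{t=1}^m |a_t|) · (Σ_{J strictly increasing k-tuples} |b(J)|). -/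

import Mathlib

open scoped Classical

/-- The multilinear operator Λ(a,b):
`Λ(a,b)_I = Σ_t (−1)^t a_{I(t)} b(I with t-th entry removed)` (0-indexed). -/
noncomputable def Lam {k m : ℕ} (a : Fin m → ℂ) (b : (Fin k → Fin m) → ℂ)
    (I : Fin (k + 1) → Fin m) : ℂ :=
  ∑ t : Fin (k + 1), (-1 : ℂ) ^ (t : ℕ) * a (I t) * b (I ∘ t.succAbove)

lemma range_comp_succAbove {k m : ℕ} (I : Fin (k + 1) → Fin m) (t : Fin (k + 1)) :
    Set.range I = insert (I t) (Set.range (I ∘ t.succAbove)) := by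
  ext x
  constructor
  · rintro ⟨j, rfl⟩
    rcases eq_or_ne j t with rfl | hj
    · exact Set.mem_insert _ _
    · obtain ⟨i, rfl⟩ := Fin.exists_succAbove_eq hj
      exact Set.mem_insert_of_mem _ ⟨i, rfl⟩
  · rintro (rfl | ⟨i, rfl⟩)
    · exact ⟨t, rfl⟩
    · exact ⟨t.succAbove i, rfl⟩

theorem lam_l1_bound
    (k m : ℕ) (hk : 0 < k) (hm : 0 < m) (hkm : k + 1 ≤ m)
    (a : Fin m → ℂ) (b : (Fin k → Fin m) → ℂ)
    (halt : ∀ (J : Fin k → Fin m) (σ : Equiv.Perm (Fin k)),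
      b (J ∘ σ) = ((Equiv.Perm.sign σ : ℤ) : ℂ) * b J) :
    ∑ I ∈ Finset.univ.filter (fun I : Fin (k + 1) → Fin m => StrictMono I),
        ‖Lam a b I‖ ≤
      (∑ t, ‖a t‖) *
        ∑ J ∈ Finset.univ.filter (fun J : Fin k → Fin m => StrictMono J),
          ‖b J‖ := by
  classical
  set S := Finset.univ.filter (fun I : Fin (k + 1) → Fin m => StrictMono I) with hS
  set T := Finset.univ.filter (fun J : Fin k → Fin m => StrictMono J) with hT
  -- Step 1: triangle inequality on each Λ.
  have step1 : ∑ I ∈ S, ‖Lam a b I‖ ≤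
      ∑ I ∈ S, ∑ t : Fin (k + 1),
        ‖a (I t)‖ * ‖b (I ∘ t.succAbove)‖ := by
    refine Finset.sum_le_sum fun I _ => ?_
    refine (norm_sum_le _ _).trans_eq ?_
    refine Finset.sum_congr rfl fun t _ => ?_
    rw [norm_mul, norm_mul, norm_pow, norm_neg, norm_one, one_pow, one_mul]
  refine step1.trans ?_
  -- Step 2: reindex and compare with the full product sum.
  rw [Finset.sum_mul_sum]
  rw [← Finset.sum_product']
  set e : (Fin (k + 1) → Fin m) × Fin (k + 1) → Fin m × (Fin k → Fin m) :=
    fun p => (p.1 p.2, p.1 ∘ p.2.succAbove) with he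
  set gfun : Fin m × (Fin k → Fin m) → ℝ :=
    fun q => ‖a q.1‖ * ‖b q.2‖ with hgfun
  have hinj : Set.InjOn e ↑(S ×ˢ (Finset.univ : Finset (Fin (k + 1)))) := by
    rintro ⟨I, t⟩ hIt ⟨I', t'⟩ hIt' heq
    simp only [Finset.coe_product, Set.mem_prod, Finset.mem_coe, hS,
      Finset.mem_filter, Finset.mem_univ, true_and] at hIt hIt'
    have h1 : I t = I' t' := congrArg Prod.fst heq
    have h2 : I ∘ t.succAbove = I' ∘ t'.succAbove := congrArg Prod.snd heq
    have hrange : Set.range I = Set.range I' := by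
      rw [range_comp_succAbove I t, range_comp_succAbove I' t', h1, h2]
    haveI : WellFoundedLT (Fin (k + 1)) := inferInstance
    have hII : I = I' := (hIt.1.range_inj hIt'.1).1 hrange
    subst hII
    have : t = t' := hIt.1.injective h1
    simp [this]
  have hmem : ∀ p ∈ S ×ˢ (Finset.univ : Finset (Fin (k + 1))),
      e p ∈ (Finset.univ : Finset (Fin m)) ×ˢ T := by
    rintro ⟨I, t⟩ hp
    simp only [Finset.mem_product, hS, hT, Finset.mem_filter, Finset.mem_univ, true_and,
      and_true, he] at hp ⊢
    exact hp.comp (Fin.strictMono_succAbove t)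
  have key : ∑ p ∈ S ×ˢ (Finset.univ : Finset (Fin (k + 1))), gfun (e p) ≤
      ∑ q ∈ (Finset.univ : Finset (Fin m)) ×ˢ T, gfun q := by
    rw [← Finset.sum_image (g := e) (fun x hx y hy h => hinj hx hy h)]
    refine Finset.sum_le_sum_of_subset_of_nonneg ?_ fun q _ _ =>
      mul_nonneg (norm_nonneg _) (norm_nonneg _)
    intro q hq
    obtain ⟨p, hp, rfl⟩ := Finset.mem_image.mp hq
    exact hmem p hp
  simp only [he, hgfun] at key
  rw [← Finset.sum_product']
  exact key
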